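/- Let V₁, V₂, V₃ be closed subspaces of a Hilbert space with ε_{ij} = cos ∠(V_i, V_j) and ε₁₃, ε₂₃ < 1. Then cos ∠(V₁ + V₃, V₂ + V₃) ≤ (ε₁₂ + ε₁₃ ε₂₃) / (√(1 − ε₁₃²) √(1 − ε₂₃²)), and the same bound holds for cos ∠(V₁ ∩ V₃, V₂ ∩ V₃). -/

import Mathlib

open scoped RealInnerProductSpace

/-- The cosine of the Friedrichs angle between two subspaces. -/
noncomputable def friedrichsCos {H : Type*} [NormedAddCommGroup H] [InnerProductSpace ℝ H]
    (V₁ V₂ : Submodule ℝ H) : ℝ :=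
  sSup {r : ℝ | ∃ v₁ v₂ : H, v₁ ∈ V₁ ∧ v₂ ∈ V₂ ∧ ‖v₁‖ = 1 ∧ ‖v₂‖ = 1 ∧
    v₁ ∈ (V₁ ⊓ V₂)ᗮ ∧ v₂ ∈ (V₁ ⊓ V₂)ᗮ ∧ r = |⟪v₁, v₂⟫|}

namespace FriedrichsAux

variable {H : Type*} [NormedAddCommGroup H] [InnerProductSpace ℝ H]

def fcSet (V W : Submodule ℝ H) : Set ℝ :=
  {r : ℝ | ∃ v₁ v₂ : H, v₁ ∈ V ∧ v₂ ∈ W ∧ ‖v₁‖ = 1 ∧ ‖v₂‖ = 1 ∧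
    v₁ ∈ (V ⊓ W)ᗮ ∧ v₂ ∈ (V ⊓ W)ᗮ ∧ r = |⟪v₁, v₂⟫|}

lemma friedrichsCos_def (V W : Submodule ℝ H) : friedrichsCos V W = sSup (fcSet V W) := rfl

lemma fcSet_bddAbove (V W : Submodule ℝ H) : BddAbove (fcSet V W) := by
  refine ⟨1, ?_⟩
  rintro r ⟨x, y, -, -, hx, hy, -, -, rfl⟩
  calc |⟪x, y⟫| ≤ ‖x‖ * ‖y‖ := abs_real_inner_le_norm x y
  _ = 1 := by rw [hx, hy]; ring

lemma fc_nonneg (V W : Submodule ℝ H) : 0 ≤ friedrichsCos V W := by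
  refine Real.sSup_nonneg ?_
  rintro r ⟨x, y, -, -, -, -, -, -, rfl⟩
  exact abs_nonneg _

lemma fc_le_one (V W : Submodule ℝ H) : friedrichsCos V W ≤ 1 := by
  refine Real.sSup_le ?_ zero_le_one
  rintro r ⟨x, y, -, -, hx, hy, -, -, rfl⟩
  calc |⟪x, y⟫| ≤ ‖x‖ * ‖y‖ := abs_real_inner_le_norm x y
  _ = 1 := by rw [hx, hy]; ring

lemma fc_app {V W : Submodule ℝ H} {x y : H} (hx : x ∈ V) (hy : y ∈ W)
    (hx' : x ∈ (V ⊓ W)ᗮ) (hy' : y ∈ (V ⊓ W)ᗮ) :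
    |⟪x, y⟫| ≤ friedrichsCos V W * (‖x‖ * ‖y‖) := by
  rcases eq_or_ne x 0 with rfl | hx0
  · simp only [inner_zero_left, abs_zero]
    have := fc_nonneg V W
    positivity
  rcases eq_or_ne y 0 with rfl | hy0
  · simp only [inner_zero_right, abs_zero]
    have := fc_nonneg V W
    positivity
  have hxn : 0 < ‖x‖ := norm_pos_iff.mpr hx0
  have hyn : 0 < ‖y‖ := norm_pos_iff.mpr hy0
  have hmem : |⟪(‖x‖⁻¹ • x), (‖y‖⁻¹ • y)⟫| ∈ fcSet V W := by
    refine ⟨‖x‖⁻¹ • x, ‖y‖⁻¹ • y, V.smul_mem _ hx, W.smul_mem _ hy, ?_, ?_,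
      Submodule.smul_mem _ _ hx', Submodule.smul_mem _ _ hy', rfl⟩
    · rw [norm_smul, norm_inv, norm_norm, inv_mul_cancel₀ hxn.ne']
    · rw [norm_smul, norm_inv, norm_norm, inv_mul_cancel₀ hyn.ne']
  have hle : |⟪(‖x‖⁻¹ • x), (‖y‖⁻¹ • y)⟫| ≤ friedrichsCos V W :=
    le_csSup (fcSet_bddAbove V W) hmem
  have heq : |⟪(‖x‖⁻¹ • x), (‖y‖⁻¹ • y)⟫| = ‖x‖⁻¹ * (‖y‖⁻¹ * |⟪x, y⟫|) := by
    rw [real_inner_smul_left, real_inner_smul_right, abs_mul, abs_mul,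
      abs_inv, abs_inv, abs_norm, abs_norm]
  rw [heq] at hle
  have := mul_le_mul_of_nonneg_left hle (le_of_lt (mul_pos hxn hyn))
  calc |⟪x, y⟫| = ‖x‖ * ‖y‖ * (‖x‖⁻¹ * (‖y‖⁻¹ * |⟪x, y⟫|)) := by
        field_simp
  _ ≤ ‖x‖ * ‖y‖ * friedrichsCos V W := this
  _ = friedrichsCos V W * (‖x‖ * ‖y‖) := by ring

end FriedrichsAux
section Chunk2
open FriedrichsAux

variable {H : Type*} [NormedAddCommGroup H] [InnerProductSpace ℝ H]

namespace FriedrichsAux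

noncomputable def pj (K : Submodule ℝ H) [Submodule.HasOrthogonalProjection K] (x : H) : H :=
  ↑(Submodule.orthogonalProjectionOnto K x)

variable (K L : Submodule ℝ H) [Submodule.HasOrthogonalProjection K] [Submodule.HasOrthogonalProjection L]

lemma pj_mem (x : H) : pj K x ∈ K := SetLike.coe_mem _

lemma sub_pj (x : H) : x - pj K x ∈ Kᗮ := K.sub_starProjection_mem_orthogonal x

lemma pj_map_sub (x y : H) : pj K (x - y) = pj K x - pj K y := by
  simp [pj, map_sub]

lemma pj_eq_self {x : H} (hx : x ∈ K) : pj K x = x :=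
  K.starProjection_eq_self_iff.mpr hx

lemma pj_eq_zero {x : H} (hx : x ∈ Kᗮ) : pj K x = 0 := by
  simp [pj, Submodule.orthogonalProjectionOnto_apply_of_mem_orthogonal hx]

lemma inner_pj_pj_left (x y : H) : ⟪x, pj K y⟫ = ⟪pj K x, pj K y⟫ := by
  have h : ⟪x - pj K x, pj K y⟫ = 0 :=
    Submodule.inner_left_of_mem_orthogonal (pj_mem K y) (sub_pj K x)
  simp only [inner_sub_left] at h
  linarith

lemma inner_pj_pj_right (x y : H) : ⟪pj K x, y⟫ = ⟪pj K x, pj K y⟫ := by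
  have h : ⟪pj K x, y - pj K y⟫ = 0 :=
    Submodule.inner_right_of_mem_orthogonal (pj_mem K x) (sub_pj K y)
  simp only [inner_sub_right] at h
  linarith

lemma norm_pj_sq (x : H) : ‖x‖ ^ 2 = ‖pj K x‖ ^ 2 + ‖x - pj K x‖ ^ 2 := by
  have h : ⟪pj K x, x - pj K x⟫ = 0 :=
    Submodule.inner_right_of_mem_orthogonal (pj_mem K x) (sub_pj K x)
  have hx : x = pj K x + (x - pj K x) := by abel
  calc ‖x‖ ^ 2 = ‖pj K x + (x - pj K x)‖ ^ 2 := by rw [← hx]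
  _ = ‖pj K x‖ ^ 2 + 2 * ⟪pj K x, x - pj K x⟫ + ‖x - pj K x‖ ^ 2 := norm_add_sq_real _ _
  _ = _ := by rw [h]; ring

lemma norm_pj_le (x : H) : ‖pj K x‖ ≤ ‖x‖ := by
  nlinarith [norm_pj_sq K x, norm_nonneg (x - pj K x), norm_nonneg x, norm_nonneg (pj K x)]

lemma norm_sub_pj_le (x : H) : ‖x - pj K x‖ ≤ ‖x‖ := by
  nlinarith [norm_pj_sq K x, norm_nonneg (x - pj K x), norm_nonneg x, norm_nonneg (pj K x)]

lemma inner_self_pj (x : H) : ⟪x, pj K x⟫ = ‖pj K x‖ ^ 2 := by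
  rw [inner_pj_pj_left, real_inner_self_eq_norm_sq]

/-- abbreviation bundle -/
lemma ident_e4 (a b : H) :
    ⟪pj K (a - pj L a), pj K (pj L b)⟫ =
      ⟪pj L a - pj K (pj L a), pj L b - pj K (pj L b)⟫ - ⟪a - pj K a, pj L b⟫ := by
  set qa := pj K a
  set sa := pj L a
  set sb := pj L b
  set qsa := pj K sa
  set qsb := pj K sb
  have hqa' : pj K (a - sa) = qa - qsa := pj_map_sub K a sa
  -- ⟪sa, sb⟫ = ⟪a, sb⟫
  have t1 : ⟪a, sb⟫ = ⟪sa, sb⟫ := by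
    have := inner_pj_pj_left L a b
    simpa [sa, sb] using this
  -- ⟪a, sb⟫ = ⟪a - qa, sb⟫ + ⟪qa, sb⟫
  have t2 : ⟪a - qa, sb⟫ = ⟪a, sb⟫ - ⟪qa, sb⟫ := by
    simp only [inner_sub_left]
  -- ⟪qa, sb⟫ = ⟪qa, qsb⟫
  have t3 : ⟪qa, sb⟫ = ⟪qa, qsb⟫ := inner_pj_pj_right K a sb
  -- expansion of ⟪qa, qsb⟫ via qa = (qa - qsa) + qsa
  have t4 : ⟪qa, qsb⟫ = ⟪qa - qsa, qsb⟫ + ⟪qsa, qsb⟫ := by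
    simp only [inner_sub_left]; ring
  -- ⟪sa, sb⟫ = ⟪qsa, qsb⟫ + ⟪sa - qsa, sb - qsb⟫
  have c1 : ⟪qsa, sb - qsb⟫ = 0 :=
    Submodule.inner_right_of_mem_orthogonal (pj_mem K sa) (sub_pj K sb)
  have c2 : ⟪sa - qsa, qsb⟫ = 0 :=
    Submodule.inner_left_of_mem_orthogonal (pj_mem K sb) (sub_pj K sa)
  have t5 : ⟪sa, sb⟫ = ⟪qsa, qsb⟫ + ⟪sa - qsa, sb - qsb⟫ := by
    simp only [inner_sub_left, inner_sub_right] at c1 c2 ⊢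
    linarith
  rw [hqa']
  simp only [inner_sub_left] at *
  linarith

lemma ident_main (a b : H) :
    ⟪a - pj K a, b - pj K b⟫ =
      ⟪a - pj L a, b - pj L b⟫ - ⟪pj K (a - pj L a), pj K (b - pj L b)⟫
        - ⟪pj L a - pj K (pj L a), pj L b - pj K (pj L b)⟫
        + ⟪a - pj K a, pj L b⟫ + ⟪b - pj K b, pj L a⟫ := by
  set qa := pj K a
  set qb := pj K b
  set sa := pj L a
  set sb := pj L b
  set qsa := pj K sa
  set qsb := pj K sb
  have hqa' : pj K (a - sa) = qa - qsa := pj_map_sub K a sa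
  have hqb' : pj K (b - sb) = qb - qsb := pj_map_sub K b sb
  -- e1
  have h3 : ⟪a, qb⟫ = ⟪qa, qb⟫ := inner_pj_pj_left K a b
  have h4 : ⟪qa, b⟫ = ⟪qa, qb⟫ := inner_pj_pj_right K a b
  -- e2 crosses
  have h5 : ⟪a - sa, sb⟫ = 0 :=
    Submodule.inner_left_of_mem_orthogonal (pj_mem L b) (sub_pj L a)
  have h6 : ⟪sa, b - sb⟫ = 0 :=
    Submodule.inner_right_of_mem_orthogonal (pj_mem L a) (sub_pj L b)
  -- e4 twice
  have e4 := ident_e4 K L a b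
  have e5 := ident_e4 K L b a
  rw [hqa'] at e4
  rw [hqb'] at e5
  -- t5
  have c1 : ⟪qsa, sb - qsb⟫ = 0 :=
    Submodule.inner_right_of_mem_orthogonal (pj_mem K sa) (sub_pj K sb)
  have c2 : ⟪sa - qsa, qsb⟫ = 0 :=
    Submodule.inner_left_of_mem_orthogonal (pj_mem K sb) (sub_pj K sa)
  have comm1 : ⟪pj L b - pj K (pj L b), pj L a - pj K (pj L a)⟫
      = ⟪sa - qsa, sb - qsb⟫ := real_inner_comm _ _
  have comm2 : ⟪qb - qsb, qsa⟫ = ⟪qsa, qb - qsb⟫ := real_inner_comm _ _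
  rw [comm1] at e5
  rw [hqa', hqb']
  simp only [inner_sub_left, inner_sub_right] at *
  linarith

lemma ident_side (a : H) :
    ‖pj K (a - pj L a)‖ ^ 2 + ‖pj L a - pj K (pj L a)‖ ^ 2 =
      ‖pj K a‖ ^ 2 - ‖pj L a‖ ^ 2 + 2 * ⟪a - pj K a, pj L a⟫ := by
  set qa := pj K a
  set sa := pj L a
  set qsa := pj K sa
  have hqa' : pj K (a - sa) = qa - qsa := pj_map_sub K a sa
  have e4 := ident_e4 K L a a
  rw [hqa'] at e4
  have hpy : ‖qa‖ ^ 2 = ‖qa - qsa‖ ^ 2 + 2 * ⟪qa - qsa, qsa⟫ + ‖qsa‖ ^ 2 := by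
    have : qa = (qa - qsa) + qsa := by abel
    calc ‖qa‖ ^ 2 = ‖(qa - qsa) + qsa‖ ^ 2 := by rw [← this]
    _ = _ := norm_add_sq_real _ _
  have hpy2 : ‖sa‖ ^ 2 = ‖qsa‖ ^ 2 + ‖sa - qsa‖ ^ 2 := norm_pj_sq K sa
  have hself : ⟪sa - qsa, sa - qsa⟫ = ‖sa - qsa‖ ^ 2 := real_inner_self_eq_norm_sq _
  rw [hqa']
  linarith

end FriedrichsAux
end Chunk2
namespace FriedrichsAux

variable {H : Type*} [NormedAddCommGroup H] [InnerProductSpace ℝ H]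

lemma two_CS {A B C D : ℝ} (hA : 0 ≤ A) (hB : 0 ≤ B) (hC : 0 ≤ C) (hD : 0 ≤ D) :
    A * C + B * D ≤ Real.sqrt (A ^ 2 + B ^ 2) * Real.sqrt (C ^ 2 + D ^ 2) := by
  rw [← Real.sqrt_mul (by positivity)]
  refine Real.le_sqrt_of_sq_le ?_
  nlinarith [sq_nonneg (A * D - B * C)]

lemma pj_orthocompl_mem {W₁ W₃ : Submodule ℝ H} [Submodule.HasOrthogonalProjection W₃] {a : H}
    (haR : a ∈ (W₁ ⊓ W₃)ᗮ) : pj W₃ a ∈ (W₁ ⊓ W₃)ᗮ := by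
  rw [Submodule.mem_orthogonal]
  intro w hw
  have hw3 : w ∈ W₃ := (Submodule.mem_inf.mp hw).2
  have h0 : ⟪w, a⟫ = 0 := (Submodule.mem_orthogonal _ _).mp haR w hw
  have h1 : ⟪w, a - pj W₃ a⟫ = 0 :=
    Submodule.inner_right_of_mem_orthogonal hw3 (sub_pj W₃ a)
  simp only [inner_sub_right] at h1
  linarith

lemma norm_pj_le_fc_mul {W₁ W₃ : Submodule ℝ H} [Submodule.HasOrthogonalProjection W₃] {a : H}
    (ha1 : a ∈ W₁) (haR : a ∈ (W₁ ⊓ W₃)ᗮ) :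
    ‖pj W₃ a‖ ≤ friedrichsCos W₁ W₃ * ‖a‖ := by
  have happ := fc_app ha1 (pj_mem W₃ a) haR (pj_orthocompl_mem haR)
  have hsq : ⟪a, pj W₃ a⟫ = ‖pj W₃ a‖ ^ 2 := inner_self_pj W₃ a
  have h1 : ‖pj W₃ a‖ ^ 2 ≤ friedrichsCos W₁ W₃ * (‖a‖ * ‖pj W₃ a‖) := by
    calc ‖pj W₃ a‖ ^ 2 = ⟪a, pj W₃ a⟫ := hsq.symm
    _ ≤ |⟪a, pj W₃ a⟫| := le_abs_self _
    _ ≤ _ := happ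
  have h2 : (0:ℝ) ≤ ‖pj W₃ a‖ := norm_nonneg _
  have h3 : (0:ℝ) ≤ friedrichsCos W₁ W₃ * ‖a‖ :=
    mul_nonneg (fc_nonneg _ _) (norm_nonneg _)
  rcases eq_or_lt_of_le h2 with h | h
  · rw [← h]; exact h3
  · have : ‖pj W₃ a‖ * ‖pj W₃ a‖ ≤ (friedrichsCos W₁ W₃ * ‖a‖) * ‖pj W₃ a‖ := by nlinarith
    exact le_of_mul_le_mul_right this h

lemma key_ineq (W₁ W₂ W₃ : Submodule ℝ H) [Submodule.HasOrthogonalProjection W₃]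
    [Submodule.HasOrthogonalProjection (W₁ ⊓ W₂)]
    {a b : H} (ha1 : a ∈ W₁) (haR : a ∈ (W₁ ⊓ W₃)ᗮ) (hb2 : b ∈ W₂) (hbT : b ∈ (W₂ ⊓ W₃)ᗮ)
    {du dv : ℝ} (hdu : ‖pj (W₁ ⊓ W₂) (a - pj W₃ a)‖ ≤ du)
    (hdv : ‖pj (W₁ ⊓ W₂) (b - pj W₃ b)‖ ≤ dv) :
    |⟪a - pj W₃ a, b - pj W₃ b⟫| ≤
      friedrichsCos W₁ W₂ * (‖a‖ * ‖b‖)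
      + Real.sqrt ((friedrichsCos W₁ W₃) ^ 2 * ‖a‖ ^ 2 + 2 * (du * ‖a‖))
        * Real.sqrt ((friedrichsCos W₂ W₃) ^ 2 * ‖b‖ ^ 2 + 2 * (dv * ‖b‖))
      + du * ‖b‖ + dv * ‖a‖ := by
  have hdu0 : (0:ℝ) ≤ du := le_trans (norm_nonneg _) hdu
  have hdv0 : (0:ℝ) ≤ dv := le_trans (norm_nonneg _) hdv
  -- abbreviations
  have hsaW : pj (W₁ ⊓ W₂) a ∈ W₁ ⊓ W₂ := pj_mem _ a
  have hsbW : pj (W₁ ⊓ W₂) b ∈ W₁ ⊓ W₂ := pj_mem _ b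
  have ha' : a - pj (W₁ ⊓ W₂) a ∈ W₁ := W₁.sub_mem ha1 (Submodule.mem_inf.mp hsaW).1
  have hb' : b - pj (W₁ ⊓ W₂) b ∈ W₂ := W₂.sub_mem hb2 (Submodule.mem_inf.mp hsbW).2
  have ha'o : a - pj (W₁ ⊓ W₂) a ∈ (W₁ ⊓ W₂)ᗮ := sub_pj _ a
  have hb'o : b - pj (W₁ ⊓ W₂) b ∈ (W₁ ⊓ W₂)ᗮ := sub_pj _ b
  -- fc applications
  have hab' : |⟪a - pj (W₁ ⊓ W₂) a, b - pj (W₁ ⊓ W₂) b⟫| ≤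
      friedrichsCos W₁ W₂ * (‖a‖ * ‖b‖) := by
    refine le_trans (fc_app ha' hb' ha'o hb'o) ?_
    have h1 : ‖a - pj (W₁ ⊓ W₂) a‖ * ‖b - pj (W₁ ⊓ W₂) b‖ ≤ ‖a‖ * ‖b‖ :=
      mul_le_mul (norm_sub_pj_le _ a) (norm_sub_pj_le _ b) (norm_nonneg _) (norm_nonneg _)
    exact mul_le_mul_of_nonneg_left h1 (fc_nonneg _ _)
  have hnqa : ‖pj W₃ a‖ ≤ friedrichsCos W₁ W₃ * ‖a‖ := norm_pj_le_fc_mul ha1 haR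
  have hnqb : ‖pj W₃ b‖ ≤ friedrichsCos W₂ W₃ * ‖b‖ := norm_pj_le_fc_mul hb2 hbT
  -- error bounds
  have herr : ∀ x y : H, ∀ d : ℝ, ‖pj (W₁ ⊓ W₂) x‖ ≤ d →
      |⟪x, pj (W₁ ⊓ W₂) y⟫| ≤ d * ‖y‖ := by
    intro x y d hd
    rw [inner_pj_pj_left]
    calc |⟪pj (W₁ ⊓ W₂) x, pj (W₁ ⊓ W₂) y⟫| ≤ ‖pj (W₁ ⊓ W₂) x‖ * ‖pj (W₁ ⊓ W₂) y‖ :=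
          abs_real_inner_le_norm _ _
    _ ≤ d * ‖y‖ := mul_le_mul hd (norm_pj_le _ y) (norm_nonneg _)
          (le_trans (norm_nonneg _) hd)
  have hD := herr (a - pj W₃ a) b du hdu
  have hE := herr (b - pj W₃ b) a dv hdv
  have hF := herr (a - pj W₃ a) a du hdu
  have hG := herr (b - pj W₃ b) b dv hdv
  -- side bounds
  have hsideA : ‖pj W₃ (a - pj (W₁ ⊓ W₂) a)‖ ^ 2 + ‖pj (W₁ ⊓ W₂) a - pj W₃ (pj (W₁ ⊓ W₂) a)‖ ^ 2
      ≤ (friedrichsCos W₁ W₃) ^ 2 * ‖a‖ ^ 2 + 2 * (du * ‖a‖) := by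
    have hid := ident_side W₃ (W₁ ⊓ W₂) a
    have h1 : ‖pj W₃ a‖ ^ 2 ≤ ((friedrichsCos W₁ W₃) * ‖a‖) ^ 2 := by
      have := mul_self_le_mul_self (norm_nonneg _) hnqa
      nlinarith
    have h2 : ⟪a - pj W₃ a, pj (W₁ ⊓ W₂) a⟫ ≤ du * ‖a‖ := le_trans (le_abs_self _) hF
    nlinarith [sq_nonneg ‖pj (W₁ ⊓ W₂) a‖]
  have hsideB : ‖pj W₃ (b - pj (W₁ ⊓ W₂) b)‖ ^ 2 + ‖pj (W₁ ⊓ W₂) b - pj W₃ (pj (W₁ ⊓ W₂) b)‖ ^ 2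
      ≤ (friedrichsCos W₂ W₃) ^ 2 * ‖b‖ ^ 2 + 2 * (dv * ‖b‖) := by
    have hid := ident_side W₃ (W₁ ⊓ W₂) b
    have h1 : ‖pj W₃ b‖ ^ 2 ≤ ((friedrichsCos W₂ W₃) * ‖b‖) ^ 2 := by
      have := mul_self_le_mul_self (norm_nonneg _) hnqb
      nlinarith
    have h2 : ⟪b - pj W₃ b, pj (W₁ ⊓ W₂) b⟫ ≤ dv * ‖b‖ := le_trans (le_abs_self _) hG
    nlinarith [sq_nonneg ‖pj (W₁ ⊓ W₂) b‖]
  -- central Cauchy-Schwarz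
  have hmid : |⟪pj W₃ (a - pj (W₁ ⊓ W₂) a), pj W₃ (b - pj (W₁ ⊓ W₂) b)⟫
      + ⟪pj (W₁ ⊓ W₂) a - pj W₃ (pj (W₁ ⊓ W₂) a), pj (W₁ ⊓ W₂) b - pj W₃ (pj (W₁ ⊓ W₂) b)⟫|
      ≤ Real.sqrt ((friedrichsCos W₁ W₃) ^ 2 * ‖a‖ ^ 2 + 2 * (du * ‖a‖))
        * Real.sqrt ((friedrichsCos W₂ W₃) ^ 2 * ‖b‖ ^ 2 + 2 * (dv * ‖b‖)) := by
    have t1 := abs_real_inner_le_norm (pj W₃ (a - pj (W₁ ⊓ W₂) a)) (pj W₃ (b - pj (W₁ ⊓ W₂) b))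
    have t2 := abs_real_inner_le_norm (pj (W₁ ⊓ W₂) a - pj W₃ (pj (W₁ ⊓ W₂) a))
      (pj (W₁ ⊓ W₂) b - pj W₃ (pj (W₁ ⊓ W₂) b))
    have t3 := two_CS (norm_nonneg (pj W₃ (a - pj (W₁ ⊓ W₂) a)))
      (norm_nonneg (pj (W₁ ⊓ W₂) a - pj W₃ (pj (W₁ ⊓ W₂) a)))
      (norm_nonneg (pj W₃ (b - pj (W₁ ⊓ W₂) b)))
      (norm_nonneg (pj (W₁ ⊓ W₂) b - pj W₃ (pj (W₁ ⊓ W₂) b)))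
    have t4 : Real.sqrt (‖pj W₃ (a - pj (W₁ ⊓ W₂) a)‖ ^ 2
        + ‖pj (W₁ ⊓ W₂) a - pj W₃ (pj (W₁ ⊓ W₂) a)‖ ^ 2)
        ≤ Real.sqrt ((friedrichsCos W₁ W₃) ^ 2 * ‖a‖ ^ 2 + 2 * (du * ‖a‖)) :=
      Real.sqrt_le_sqrt hsideA
    have t5 : Real.sqrt (‖pj W₃ (b - pj (W₁ ⊓ W₂) b)‖ ^ 2
        + ‖pj (W₁ ⊓ W₂) b - pj W₃ (pj (W₁ ⊓ W₂) b)‖ ^ 2)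
        ≤ Real.sqrt ((friedrichsCos W₂ W₃) ^ 2 * ‖b‖ ^ 2 + 2 * (dv * ‖b‖)) :=
      Real.sqrt_le_sqrt hsideB
    calc |_ + _| ≤ |⟪pj W₃ (a - pj (W₁ ⊓ W₂) a), pj W₃ (b - pj (W₁ ⊓ W₂) b)⟫|
        + |⟪pj (W₁ ⊓ W₂) a - pj W₃ (pj (W₁ ⊓ W₂) a),
            pj (W₁ ⊓ W₂) b - pj W₃ (pj (W₁ ⊓ W₂) b)⟫| := abs_add_le _ _
    _ ≤ ‖pj W₃ (a - pj (W₁ ⊓ W₂) a)‖ * ‖pj W₃ (b - pj (W₁ ⊓ W₂) b)‖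
        + ‖pj (W₁ ⊓ W₂) a - pj W₃ (pj (W₁ ⊓ W₂) a)‖
          * ‖pj (W₁ ⊓ W₂) b - pj W₃ (pj (W₁ ⊓ W₂) b)‖ := add_le_add t1 t2
    _ ≤ Real.sqrt (‖pj W₃ (a - pj (W₁ ⊓ W₂) a)‖ ^ 2
          + ‖pj (W₁ ⊓ W₂) a - pj W₃ (pj (W₁ ⊓ W₂) a)‖ ^ 2)
        * Real.sqrt (‖pj W₃ (b - pj (W₁ ⊓ W₂) b)‖ ^ 2
          + ‖pj (W₁ ⊓ W₂) b - pj W₃ (pj (W₁ ⊓ W₂) b)‖ ^ 2) := t3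
    _ ≤ _ := mul_le_mul t4 t5 (Real.sqrt_nonneg _) (Real.sqrt_nonneg _)
  -- main identity and assembly
  have hmain := ident_main W₃ (W₁ ⊓ W₂) a b
  have habs : |⟪a - pj W₃ a, b - pj W₃ b⟫| ≤
      |⟪a - pj (W₁ ⊓ W₂) a, b - pj (W₁ ⊓ W₂) b⟫|
      + |⟪pj W₃ (a - pj (W₁ ⊓ W₂) a), pj W₃ (b - pj (W₁ ⊓ W₂) b)⟫
          + ⟪pj (W₁ ⊓ W₂) a - pj W₃ (pj (W₁ ⊓ W₂) a),
              pj (W₁ ⊓ W₂) b - pj W₃ (pj (W₁ ⊓ W₂) b)⟫|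
      + |⟪a - pj W₃ a, pj (W₁ ⊓ W₂) b⟫| + |⟪b - pj W₃ b, pj (W₁ ⊓ W₂) a⟫| := by
    rw [hmain]
    set x1 := ⟪a - pj (W₁ ⊓ W₂) a, b - pj (W₁ ⊓ W₂) b⟫
    set x2 := ⟪pj W₃ (a - pj (W₁ ⊓ W₂) a), pj W₃ (b - pj (W₁ ⊓ W₂) b)⟫
    set x3 := ⟪pj (W₁ ⊓ W₂) a - pj W₃ (pj (W₁ ⊓ W₂) a),
        pj (W₁ ⊓ W₂) b - pj W₃ (pj (W₁ ⊓ W₂) b)⟫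
    set x4 := ⟪a - pj W₃ a, pj (W₁ ⊓ W₂) b⟫
    set x5 := ⟪b - pj W₃ b, pj (W₁ ⊓ W₂) a⟫
    have e : x1 - x2 - x3 + x4 + x5 = x1 + (-(x2 + x3)) + (x4 + x5) := by ring
    rw [e]
    calc |x1 + (-(x2 + x3)) + (x4 + x5)| ≤ |x1 + (-(x2 + x3))| + |x4 + x5| := abs_add_le _ _
    _ ≤ |x1| + |(-(x2 + x3))| + |x4 + x5| := by gcongr; exact abs_add_le _ _
    _ ≤ |x1| + |x2 + x3| + (|x4| + |x5|) := by rw [abs_neg]; gcongr; exact abs_add_le _ _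
    _ = _ := by ring
  calc |⟪a - pj W₃ a, b - pj W₃ b⟫| ≤ _ := habs
  _ ≤ friedrichsCos W₁ W₂ * (‖a‖ * ‖b‖)
      + Real.sqrt ((friedrichsCos W₁ W₃) ^ 2 * ‖a‖ ^ 2 + 2 * (du * ‖a‖))
        * Real.sqrt ((friedrichsCos W₂ W₃) ^ 2 * ‖b‖ ^ 2 + 2 * (dv * ‖b‖))
      + du * ‖b‖ + dv * ‖a‖ := by
    have := add_le_add (add_le_add (add_le_add hab' hmid) hD) hE
    linarith

end FriedrichsAux
namespace FriedrichsAux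

variable {H : Type*} [NormedAddCommGroup H] [InnerProductSpace ℝ H] [CompleteSpace H]

lemma le_of_sq_le_sq' {t u : ℝ} (ht : 0 ≤ t) (hu : 0 ≤ u) (h : t ^ 2 ≤ u ^ 2) : t ≤ u := by
  rw [← Real.sqrt_sq ht, ← Real.sqrt_sq hu]
  exact Real.sqrt_le_sqrt h

set_option maxHeartbeats 1600000 in
lemma fc_orthogonal_le {M N : Submodule ℝ H} (hM : IsClosed (M : Set H))
    (hN : IsClosed (N : Set H)) : friedrichsCos Mᗮ Nᗮ ≤ friedrichsCos M N := by
  by_cases hc : 1 ≤ friedrichsCos M N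
  · exact le_trans (fc_le_one _ _) hc
  push_neg at hc
  haveI : CompleteSpace M := hM.completeSpace_coe
  haveI : CompleteSpace N := hN.completeSpace_coe
  haveI : CompleteSpace (M ⊓ N : Submodule ℝ H) := by
    have : IsClosed ((M ⊓ N : Submodule ℝ H) : Set H) := by
      rw [Submodule.coe_inf]; exact hM.inter hN
    exact this.completeSpace_coe
  set c := friedrichsCos M N with hcdef
  have hc0 : 0 ≤ c := fc_nonneg M N
  have hs0 : 0 < 1 - c ^ 2 := by nlinarith
  set s := Real.sqrt (1 - c ^ 2) with hsdef
  have hs2 : s ^ 2 = 1 - c ^ 2 := Real.sq_sqrt (le_of_lt hs0)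
  have hspos : 0 < s := Real.sqrt_pos.mpr hs0
  have hsle1 : s ≤ 1 := by
    refine le_of_sq_le_sq' (le_of_lt hspos) zero_le_one ?_
    rw [hs2]; nlinarith
  refine Real.sSup_le ?_ hc0
  rintro r ⟨x, z, hx, hz, hx1, hz1, hxo, hzo, rfl⟩
  -- key: |⟪x,z⟫| ≤ ‖z - pj M z‖
  have hkey : |⟪x, z⟫| ≤ ‖z - pj M z‖ := by
    have h0 : ⟪x, pj M z⟫ = 0 :=
      Submodule.inner_left_of_mem_orthogonal (pj_mem M z) hx
    have : ⟪x, z⟫ = ⟪x, z - pj M z⟫ := by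
      simp only [inner_sub_right]; linarith
    rw [this]
    calc |⟪x, z - pj M z⟫| ≤ ‖x‖ * ‖z - pj M z‖ := abs_real_inner_le_norm _ _
    _ = ‖z - pj M z‖ := by rw [hx1, one_mul]
  -- lower bound for ‖pj M z‖
  have hzJ : z ∈ (M ⊓ N)ᗮ := by
    have : Nᗮ ≤ (M ⊓ N)ᗮ := Submodule.orthogonal_le inf_le_right
    exact this hz
  have hpM : s ≤ ‖pj M z‖ := by
    refine le_of_forall_pos_le_add ?_
    intro ε hε
    set δ := ε / 4 with hδdef
    have hδpos : 0 < δ := by positivity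
    -- z is in the closure of M ⊔ N
    have hzcl : z ∈ closure ((M ⊔ N : Submodule ℝ H) : Set H) := by
      have h1 : z ∈ ((M ⊔ N)ᗮ)ᗮ := by
        rw [← Submodule.inf_orthogonal]; exact hzo
      rw [Submodule.orthogonal_orthogonal_eq_closure] at h1
      rw [← Submodule.topologicalClosure_coe]
      exact h1
    obtain ⟨y, hy, hyd⟩ := Metric.mem_closure_iff.mp hzcl δ hδpos
    rw [dist_eq_norm] at hyd
    obtain ⟨m, hm, n, hn, rfl⟩ := Submodule.mem_sup.mp hy
    -- reduce modulo J := M ⊓ N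
    set mb := m - pj (M ⊓ N) m with hmbdef
    set n1 := n + pj (M ⊓ N) m with hn1def
    set nb := n1 - pj (M ⊓ N) n1 with hnbdef
    have hmbM : mb ∈ M := M.sub_mem hm (Submodule.mem_inf.mp (pj_mem _ m)).1
    have hmbJ : mb ∈ (M ⊓ N)ᗮ := sub_pj _ m
    have hn1N : n1 ∈ N := N.add_mem hn (Submodule.mem_inf.mp (pj_mem _ m)).2
    have hnbN : nb ∈ N := N.sub_mem hn1N (Submodule.mem_inf.mp (pj_mem _ n1)).2
    have hnbJ : nb ∈ (M ⊓ N)ᗮ := sub_pj _ n1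
    have hmn : m + n = mb + n1 := by rw [hmbdef, hn1def]; abel
    -- ‖z - (mb + nb)‖ ≤ 2δ
    have hpjn1 : ‖pj (M ⊓ N) n1‖ ≤ δ := by
      have h1 : pj (M ⊓ N) (mb + n1) = pj (M ⊓ N) n1 := by
        have : pj (M ⊓ N) (mb + n1) = pj (M ⊓ N) mb + pj (M ⊓ N) n1 := by
          simp [pj, map_add]
        rw [this, pj_eq_zero _ hmbJ, zero_add]
      have hz0 : pj (M ⊓ N) z = 0 := pj_eq_zero _ hzJ
      have h2 : pj (M ⊓ N) n1 = pj (M ⊓ N) ((m + n) - z) := by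
        rw [pj_map_sub, hz0, sub_zero, hmn, h1]
      rw [h2]
      calc ‖pj (M ⊓ N) (m + n - z)‖ ≤ ‖m + n - z‖ := norm_pj_le _ _
      _ = ‖z - (m + n)‖ := by rw [norm_sub_rev]
      _ ≤ δ := le_of_lt hyd
    have hclose : ‖z - (mb + nb)‖ ≤ 2 * δ := by
      have : z - (mb + nb) = (z - (m + n)) + pj (M ⊓ N) n1 := by
        rw [hnbdef, hmn]; abel
      rw [this]
      calc ‖(z - (m + n)) + pj (M ⊓ N) n1‖ ≤ ‖z - (m + n)‖ + ‖pj (M ⊓ N) n1‖ :=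
            norm_add_le _ _
      _ ≤ 2 * δ := by linarith [le_of_lt hyd]
    -- 1 - 2δ ≤ ‖pj M z‖ * ‖mb‖
    have hinner1 : ⟪z, mb⟫ ≤ ‖pj M z‖ * ‖mb‖ := by
      have h0 : ⟪z - pj M z, mb⟫ = 0 :=
        Submodule.inner_left_of_mem_orthogonal hmbM (sub_pj M z)
      have he : ⟪z, mb⟫ = ⟪pj M z, mb⟫ := by
        simp only [inner_sub_left] at h0; linarith
      rw [he]
      exact real_inner_le_norm _ _
    have hinner2 : ⟪z, nb⟫ = 0 := by
      rw [real_inner_comm]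
      exact Submodule.inner_right_of_mem_orthogonal hnbN hz
    have hinner3 : ⟪z, z - (mb + nb)⟫ ≤ 2 * δ := by
      calc ⟪z, z - (mb + nb)⟫ ≤ ‖z‖ * ‖z - (mb + nb)‖ := real_inner_le_norm _ _
      _ ≤ 2 * δ := by rw [hz1, one_mul]; exact hclose
    have hone : 1 - 2 * δ ≤ ‖pj M z‖ * ‖mb‖ := by
      have hsplit : ⟪z, z⟫ = ⟪z, mb⟫ + ⟪z, nb⟫ + ⟪z, z - (mb + nb)⟫ := by
        simp only [inner_sub_right, inner_add_right]; ring
      have hzz : ⟪z, z⟫ = 1 := by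
        rw [real_inner_self_eq_norm_sq, hz1]; norm_num
      rw [hzz] at hsplit
      linarith
    -- ‖mb‖ bound via the angle
    have hfc : |⟪mb, nb⟫| ≤ c * (‖mb‖ * ‖nb‖) := fc_app hmbM hnbN hmbJ hnbJ
    have hw2 : ‖mb + nb‖ ^ 2 = ‖mb‖ ^ 2 + 2 * ⟪mb, nb⟫ + ‖nb‖ ^ 2 := norm_add_sq_real _ _
    have hband : (1 - c ^ 2) * ‖mb‖ ^ 2 ≤ ‖mb + nb‖ ^ 2 := by
      have h1 : -(c * (‖mb‖ * ‖nb‖)) ≤ ⟪mb, nb⟫ := neg_le_of_abs_le hfc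
      nlinarith [sq_nonneg (‖nb‖ - c * ‖mb‖)]
    have hwle : ‖mb + nb‖ ≤ 1 + 2 * δ := by
      have : mb + nb = z - (z - (mb + nb)) := by abel
      rw [this]
      calc ‖z - (z - (mb + nb))‖ ≤ ‖z‖ + ‖z - (mb + nb)‖ := norm_sub_le _ _
      _ ≤ 1 + 2 * δ := by rw [hz1]; linarith
    have hms : s * ‖mb‖ ≤ 1 + 2 * δ := by
      refine le_of_sq_le_sq' (by positivity) (by positivity) ?_
      have h1 : (s * ‖mb‖) ^ 2 = (1 - c ^ 2) * ‖mb‖ ^ 2 := by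
        rw [mul_pow, hs2]
      rw [h1]
      calc (1 - c ^ 2) * ‖mb‖ ^ 2 ≤ ‖mb + nb‖ ^ 2 := hband
      _ ≤ (1 + 2 * δ) ^ 2 := by
          nlinarith [norm_nonneg (mb + nb), hwle]
    -- combine
    have hple1 : ‖pj M z‖ ≤ 1 := by
      calc ‖pj M z‖ ≤ ‖z‖ := norm_pj_le _ _
      _ = 1 := hz1
    have hA := mul_le_mul_of_nonneg_left hone (le_of_lt hspos)
    have hB := mul_le_mul_of_nonneg_left hms (norm_nonneg (pj M z))
    have hA' : s * (1 - 2 * δ) ≤ ‖pj M z‖ * (s * ‖mb‖) := by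
      calc s * (1 - 2 * δ) ≤ s * (‖pj M z‖ * ‖mb‖) := hA
      _ = ‖pj M z‖ * (s * ‖mb‖) := by ring
    have hds : δ * s ≤ δ * 1 := mul_le_mul_of_nonneg_left hsle1 (le_of_lt hδpos)
    have hdp : δ * ‖pj M z‖ ≤ δ * 1 := mul_le_mul_of_nonneg_left hple1 (le_of_lt hδpos)
    have hgoal : s ≤ ‖pj M z‖ + 4 * δ := by nlinarith [hA', hB, hds, hdp]
    calc s ≤ ‖pj M z‖ + 4 * δ := hgoal
    _ = ‖pj M z‖ + ε := by rw [hδdef]; ring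
  -- finish
  have hfin : ‖z - pj M z‖ ≤ c := by
    refine le_of_sq_le_sq' (norm_nonneg _) hc0 ?_
    have hpy := norm_pj_sq M z
    rw [hz1] at hpy
    have h1 : s ^ 2 ≤ ‖pj M z‖ ^ 2 := by
      have := mul_self_le_mul_self (le_of_lt hspos) hpM
      nlinarith
    rw [hs2] at h1
    nlinarith
  exact le_trans hkey hfin

end FriedrichsAux
namespace FriedrichsAux

lemma sqrt_add_le' {x y : ℝ} (hx : 0 ≤ x) (hy : 0 ≤ y) :
    Real.sqrt (x + y) ≤ Real.sqrt x + Real.sqrt y := by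
  refine le_of_sq_le_sq' (Real.sqrt_nonneg _) (by positivity) ?_
  rw [Real.sq_sqrt (by positivity)]
  nlinarith [Real.sq_sqrt hx, Real.sq_sqrt hy, Real.sqrt_nonneg x, Real.sqrt_nonneg y,
    mul_nonneg (Real.sqrt_nonneg x) (Real.sqrt_nonneg y)]

lemma sqrt_le_one_add {x : ℝ} (hx : 0 ≤ x) : Real.sqrt x ≤ 1 + x := by
  refine le_of_sq_le_sq' (Real.sqrt_nonneg _) (by positivity) ?_
  rw [Real.sq_sqrt hx]
  nlinarith

lemma squeeze_sqrt {x ρ C1 C2 : ℝ} (hC1 : 0 ≤ C1) (hC2 : 0 ≤ C2)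
    (h : ∀ δ : ℝ, 0 < δ → δ ≤ 1 → x ≤ ρ + C1 * Real.sqrt δ + C2 * δ) : x ≤ ρ := by
  by_contra hx
  push_neg at hx
  set ε := x - ρ with hεdef
  have hε : 0 < ε := by simp only [hεdef]; linarith
  set δ := min 1 ((ε / (C1 + C2 + 1)) ^ 2) with hδdef
  have hCpos : 0 < C1 + C2 + 1 := by linarith
  have hδpos : 0 < δ := lt_min one_pos (by positivity)
  have hδ1 : δ ≤ 1 := min_le_left _ _
  have hsd : Real.sqrt δ ≤ ε / (C1 + C2 + 1) := by
    calc Real.sqrt δ ≤ Real.sqrt ((ε / (C1 + C2 + 1)) ^ 2) :=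
          Real.sqrt_le_sqrt (min_le_right _ _)
    _ = ε / (C1 + C2 + 1) := Real.sqrt_sq (by positivity)
  have hdd : δ ≤ Real.sqrt δ := by
    have h1 : Real.sqrt δ ≤ 1 := by
      rw [show (1:ℝ) = Real.sqrt 1 by rw [Real.sqrt_one]]
      exact Real.sqrt_le_sqrt hδ1
    nlinarith [Real.sq_sqrt (le_of_lt hδpos), Real.sqrt_nonneg δ]
  have hb := h δ hδpos hδ1
  have h2 : C1 * Real.sqrt δ + C2 * δ ≤ (C1 + C2) * (ε / (C1 + C2 + 1)) := by
    have e1 : C1 * Real.sqrt δ ≤ C1 * (ε / (C1 + C2 + 1)) :=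
      mul_le_mul_of_nonneg_left hsd hC1
    have e2 : C2 * δ ≤ C2 * (ε / (C1 + C2 + 1)) :=
      mul_le_mul_of_nonneg_left (le_trans hdd hsd) hC2
    linarith
  have h3 : (C1 + C2) * (ε / (C1 + C2 + 1)) < ε := by
    have ht : 0 < ε / (C1 + C2 + 1) := by positivity
    have he : ε = (C1 + C2 + 1) * (ε / (C1 + C2 + 1)) := by field_simp
    nlinarith
  have : x < ρ + ε := by linarith
  simp only [hεdef] at this
  linarith

end FriedrichsAux
namespace FriedrichsAux

lemma one_sub_sq_pos {c : ℝ} (h0 : 0 ≤ c) (h1 : c < 1) : 0 < 1 - c ^ 2 := by nlinarith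

lemma sq_le_sq_of_le {x y : ℝ} (hx : 0 ≤ x) (h : x ≤ y) : x ^ 2 ≤ y ^ 2 := by
  nlinarith [mul_self_le_mul_self hx h]


variable {H : Type*} [NormedAddCommGroup H] [InnerProductSpace ℝ H] [CompleteSpace H]

lemma approx_side (Wa W₃ : Submodule ℝ H) [Submodule.HasOrthogonalProjection W₃]
    (hinter : IsClosed ((Wa ⊓ W₃ : Submodule ℝ H) : Set H))
    {u : H} (hu : u ∈ (Wa ⊔ W₃).topologicalClosure) (hu3 : u ∈ W₃ᗮ)
    {δ : ℝ} (hδpos : 0 < δ) :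
    ∃ a : H, a ∈ Wa ∧ a ∈ (Wa ⊓ W₃)ᗮ ∧ ‖u - (a - pj W₃ a)‖ ≤ δ := by
  haveI : CompleteSpace (Wa ⊓ W₃ : Submodule ℝ H) := hinter.completeSpace_coe
  have hucl : u ∈ closure ((Wa ⊔ W₃ : Submodule ℝ H) : Set H) := by
    rw [← Submodule.topologicalClosure_coe]; exact hu
  obtain ⟨y, hy, hyd⟩ := Metric.mem_closure_iff.mp hucl δ hδpos
  rw [dist_eq_norm] at hyd
  obtain ⟨x, hx, cc, hcc, rfl⟩ := Submodule.mem_sup.mp hy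
  refine ⟨x - pj (Wa ⊓ W₃) x, Wa.sub_mem hx (Submodule.mem_inf.mp (pj_mem _ x)).1,
    sub_pj _ x, ?_⟩
  set a := x - pj (Wa ⊓ W₃) x with hadef
  have hmem3 : pj (Wa ⊓ W₃) x ∈ W₃ := (Submodule.mem_inf.mp (pj_mem _ x)).2
  have e1 : pj W₃ a = pj W₃ x - pj (Wa ⊓ W₃) x := by
    rw [hadef, pj_map_sub, pj_eq_self _ hmem3]
  have e2 : pj W₃ (x + cc) = pj W₃ x + cc := by
    have h' : pj W₃ (x + cc) = pj W₃ x + pj W₃ cc := by simp [pj, map_add]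
    rw [h', pj_eq_self _ hcc]
  have e4 : pj W₃ (u - (x + cc)) = pj W₃ u - pj W₃ (x + cc) := pj_map_sub W₃ u (x + cc)
  have e3 : u - (a - pj W₃ a) = (u - (x + cc)) - pj W₃ (u - (x + cc)) := by
    rw [e4, pj_eq_zero _ hu3, e2, e1, hadef]; abel
  rw [e3]
  exact le_trans (norm_sub_pj_le _ _) (le_of_lt hyd)

set_option maxHeartbeats 3000000 in
lemma thmS (W₁ W₂ W₃ : Submodule ℝ H) (h₁ : IsClosed (W₁ : Set H))
    (h₂ : IsClosed (W₂ : Set H)) (h₃ : IsClosed (W₃ : Set H))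
    (h13 : friedrichsCos W₁ W₃ < 1) (h23 : friedrichsCos W₂ W₃ < 1) :
    friedrichsCos ((W₁ ⊔ W₃).topologicalClosure) ((W₂ ⊔ W₃).topologicalClosure) ≤
      (friedrichsCos W₁ W₂ + friedrichsCos W₁ W₃ * friedrichsCos W₂ W₃) /
        (Real.sqrt (1 - friedrichsCos W₁ W₃ ^ 2) * Real.sqrt (1 - friedrichsCos W₂ W₃ ^ 2)) := by
  haveI : CompleteSpace W₃ := h₃.completeSpace_coe
  have hcl12 : IsClosed ((W₁ ⊓ W₂ : Submodule ℝ H) : Set H) := by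
    rw [Submodule.coe_inf]; exact h₁.inter h₂
  have hcl13 : IsClosed ((W₁ ⊓ W₃ : Submodule ℝ H) : Set H) := by
    rw [Submodule.coe_inf]; exact h₁.inter h₃
  have hcl23 : IsClosed ((W₂ ⊓ W₃ : Submodule ℝ H) : Set H) := by
    rw [Submodule.coe_inf]; exact h₂.inter h₃
  haveI : CompleteSpace (W₁ ⊓ W₂ : Submodule ℝ H) := hcl12.completeSpace_coe
  set c12 := friedrichsCos W₁ W₂ with hc12def
  set c13 := friedrichsCos W₁ W₃ with hc13def
  set c23 := friedrichsCos W₂ W₃ with hc23def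
  have hc12_0 : 0 ≤ c12 := fc_nonneg _ _
  have hc13_0 : 0 ≤ c13 := fc_nonneg _ _
  have hc23_0 : 0 ≤ c23 := fc_nonneg _ _
  have hc12_1 : c12 ≤ 1 := fc_le_one _ _
  have hc13_1 : c13 ≤ 1 := fc_le_one _ _
  have hc23_1 : c23 ≤ 1 := fc_le_one _ _
  set s13 := Real.sqrt (1 - c13 ^ 2) with hs13def
  set s23 := Real.sqrt (1 - c23 ^ 2) with hs23def
  have hs13pos : 0 < s13 := Real.sqrt_pos.mpr (one_sub_sq_pos hc13_0 h13)
  have hs23pos : 0 < s23 := Real.sqrt_pos.mpr (one_sub_sq_pos hc23_0 h23)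
  have hs13sq : s13 ^ 2 = 1 - c13 ^ 2 := Real.sq_sqrt (le_of_lt (one_sub_sq_pos hc13_0 h13))
  have hs23sq : s23 ^ 2 = 1 - c23 ^ 2 := Real.sq_sqrt (le_of_lt (one_sub_sq_pos hc23_0 h23))
  set B1 : ℝ := 2 / s13 with hB1def
  set B2 : ℝ := 2 / s23 with hB2def
  have hB1pos : 0 < B1 := by positivity
  have hB2pos : 0 < B2 := by positivity
  set ρ : ℝ := (c12 + c13 * c23) / (s13 * s23) with hρdef
  have hρ0 : 0 ≤ ρ := by positivity
  set R : ℝ := 2 / (s13 * s23) with hRdef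
  have hρR : ρ ≤ R := by
    rw [hρdef, hRdef]
    have h2' : c13 * c23 ≤ 1 := mul_le_one₀ hc13_1 hc23_0 hc23_1
    exact (div_le_div_iff_of_pos_right (by positivity)).mpr (by linarith)
  have hR0 : 0 ≤ R := by positivity
  set C1 : ℝ := B1 * (1 + 2 * B2) + B2 * (1 + 2 * B1) with hC1def
  set C2 : ℝ := 3 * R + (1 + 2 * B1) * (1 + 2 * B2) + B1 + B2 + 3 with hC2def
  have hC1_0 : 0 ≤ C1 := by positivity
  have hC2_0 : 0 ≤ C2 := by positivity
  refine Real.sSup_le ?_ hρ0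
  rintro r ⟨u, v, hu, hv, hu1, hv1, huo, hvo, rfl⟩
  refine squeeze_sqrt hC1_0 hC2_0 ?_
  intro δ hδpos hδ1
  -- orthogonality of u, v to W₃ and W₁ ⊓ W₂
  have hW3le : W₃ ≤ (W₁ ⊔ W₃).topologicalClosure ⊓ (W₂ ⊔ W₃).topologicalClosure :=
    le_inf (le_trans le_sup_right (Submodule.le_topologicalClosure _))
      (le_trans le_sup_right (Submodule.le_topologicalClosure _))
  have hW12le : W₁ ⊓ W₂ ≤ (W₁ ⊔ W₃).topologicalClosure ⊓ (W₂ ⊔ W₃).topologicalClosure :=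
    le_inf (le_trans (le_trans inf_le_left le_sup_left) (Submodule.le_topologicalClosure _))
      (le_trans (le_trans inf_le_right le_sup_left) (Submodule.le_topologicalClosure _))
  have hu3 : u ∈ W₃ᗮ := Submodule.orthogonal_le hW3le huo
  have hv3 : v ∈ W₃ᗮ := Submodule.orthogonal_le hW3le hvo
  have hu12 : u ∈ (W₁ ⊓ W₂)ᗮ := Submodule.orthogonal_le hW12le huo
  have hv12 : v ∈ (W₁ ⊓ W₂)ᗮ := Submodule.orthogonal_le hW12le hvo
  -- get the approximating vectors
  obtain ⟨a, haW, haR, hPau⟩ := approx_side W₁ W₃ hcl13 hu hu3 hδpos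
  obtain ⟨b, hbW, hbT, hPbv⟩ := approx_side W₂ W₃ hcl23 hv hv3 hδpos
  -- error bounds
  have hdu : ‖pj (W₁ ⊓ W₂) (a - pj W₃ a)‖ ≤ δ := by
    have h0 : pj (W₁ ⊓ W₂) u = 0 := pj_eq_zero _ hu12
    have he : pj (W₁ ⊓ W₂) (a - pj W₃ a) = pj (W₁ ⊓ W₂) ((a - pj W₃ a) - u) := by
      have h' := pj_map_sub (W₁ ⊓ W₂) (a - pj W₃ a) u
      rw [h0, sub_zero] at h'
      exact h'.symm
    rw [he]
    calc ‖pj (W₁ ⊓ W₂) (a - pj W₃ a - u)‖ ≤ ‖a - pj W₃ a - u‖ := norm_pj_le _ _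
    _ = ‖u - (a - pj W₃ a)‖ := by rw [norm_sub_rev]
    _ ≤ δ := hPau
  have hdv : ‖pj (W₁ ⊓ W₂) (b - pj W₃ b)‖ ≤ δ := by
    have h0 : pj (W₁ ⊓ W₂) v = 0 := pj_eq_zero _ hv12
    have he : pj (W₁ ⊓ W₂) (b - pj W₃ b) = pj (W₁ ⊓ W₂) ((b - pj W₃ b) - v) := by
      have h' := pj_map_sub (W₁ ⊓ W₂) (b - pj W₃ b) v
      rw [h0, sub_zero] at h'
      exact h'.symm
    rw [he]
    calc ‖pj (W₁ ⊓ W₂) (b - pj W₃ b - v)‖ ≤ ‖b - pj W₃ b - v‖ := norm_pj_le _ _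
    _ = ‖v - (b - pj W₃ b)‖ := by rw [norm_sub_rev]
    _ ≤ δ := hPbv
  -- norm bounds
  have hPa1 : ‖a - pj W₃ a‖ ≤ 1 + δ := by
    have he : a - pj W₃ a = u - (u - (a - pj W₃ a)) := by abel
    rw [he]
    calc ‖u - (u - (a - pj W₃ a))‖ ≤ ‖u‖ + ‖u - (a - pj W₃ a)‖ := norm_sub_le _ _
    _ ≤ 1 + δ := by rw [hu1]; linarith
  have hPb1 : ‖b - pj W₃ b‖ ≤ 1 + δ := by
    have he : b - pj W₃ b = v - (v - (b - pj W₃ b)) := by abel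
    rw [he]
    calc ‖v - (v - (b - pj W₃ b))‖ ≤ ‖v‖ + ‖v - (b - pj W₃ b)‖ := norm_sub_le _ _
    _ ≤ 1 + δ := by rw [hv1]; linarith
  have hNa : ‖a‖ ≤ (1 + δ) / s13 := by
    have hq := norm_pj_le_fc_mul haW haR
    have hpy := norm_pj_sq W₃ a
    have hq2 : ‖pj W₃ a‖ ^ 2 ≤ c13 ^ 2 * ‖a‖ ^ 2 := by
      have h' := sq_le_sq_of_le (norm_nonneg (pj W₃ a)) hq
      rw [mul_pow] at h'; exact h'
    have hp2 : ‖a - pj W₃ a‖ ^ 2 ≤ (1 + δ) ^ 2 :=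
      sq_le_sq_of_le (norm_nonneg (a - pj W₃ a)) hPa1
    have hsq : (s13 * ‖a‖) ^ 2 ≤ (1 + δ) ^ 2 := by
      rw [mul_pow, hs13sq]
      linarith [hq2, hp2, hpy]
    have h' := le_of_sq_le_sq' (by positivity) (by positivity) hsq
    rw [← le_div_iff₀' hs13pos] at h'
    exact h'
  have hNb : ‖b‖ ≤ (1 + δ) / s23 := by
    have hq := norm_pj_le_fc_mul hbW hbT
    have hpy := norm_pj_sq W₃ b
    have hq2 : ‖pj W₃ b‖ ^ 2 ≤ c23 ^ 2 * ‖b‖ ^ 2 := by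
      have h' := sq_le_sq_of_le (norm_nonneg (pj W₃ b)) hq
      rw [mul_pow] at h'; exact h'
    have hp2 : ‖b - pj W₃ b‖ ^ 2 ≤ (1 + δ) ^ 2 :=
      sq_le_sq_of_le (norm_nonneg (b - pj W₃ b)) hPb1
    have hsq : (s23 * ‖b‖) ^ 2 ≤ (1 + δ) ^ 2 := by
      rw [mul_pow, hs23sq]
      linarith [hq2, hp2, hpy]
    have h' := le_of_sq_le_sq' (by positivity) (by positivity) hsq
    rw [← le_div_iff₀' hs23pos] at h'
    exact h'
  have hNa' : ‖a‖ ≤ B1 := by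
    refine le_trans hNa ?_
    rw [hB1def]
    gcongr
    linarith
  have hNb' : ‖b‖ ≤ B2 := by
    refine le_trans hNb ?_
    rw [hB2def]
    gcongr
    linarith
  -- main estimate from key_ineq
  have KEY := key_ineq W₁ W₂ W₃ haW haR hbW hbT hdu hdv
  -- sqrt-term simplification
  set t := Real.sqrt δ with htdef
  have ht0 : 0 ≤ t := Real.sqrt_nonneg _
  have ht2 : t ^ 2 = δ := Real.sq_sqrt (le_of_lt hδpos)
  have hsqrtA : Real.sqrt (c13 ^ 2 * ‖a‖ ^ 2 + 2 * (δ * ‖a‖)) ≤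
      c13 * ‖a‖ + (1 + 2 * B1) * t := by
    have h1 : Real.sqrt (c13 ^ 2 * ‖a‖ ^ 2 + 2 * (δ * ‖a‖)) ≤
        Real.sqrt (c13 ^ 2 * ‖a‖ ^ 2) + Real.sqrt (2 * (δ * ‖a‖)) :=
      sqrt_add_le' (by positivity) (by positivity)
    have h2 : Real.sqrt (c13 ^ 2 * ‖a‖ ^ 2) = c13 * ‖a‖ := by
      rw [show c13 ^ 2 * ‖a‖ ^ 2 = (c13 * ‖a‖) ^ 2 by ring]
      exact Real.sqrt_sq (by positivity)
    have h3 : Real.sqrt (2 * (δ * ‖a‖)) ≤ (1 + 2 * B1) * t := by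
      have e1 : 2 * (δ * ‖a‖) ≤ (2 * B1) * δ := by
        have h' := mul_le_mul_of_nonneg_left hNa' (le_of_lt hδpos)
        linarith
      calc Real.sqrt (2 * (δ * ‖a‖)) ≤ Real.sqrt ((2 * B1) * δ) := Real.sqrt_le_sqrt e1
      _ = Real.sqrt (2 * B1) * t := by rw [htdef, Real.sqrt_mul (by positivity)]
      _ ≤ (1 + 2 * B1) * t := mul_le_mul_of_nonneg_right (sqrt_le_one_add (by positivity)) ht0
    linarith
  have hsqrtB : Real.sqrt (c23 ^ 2 * ‖b‖ ^ 2 + 2 * (δ * ‖b‖)) ≤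
      c23 * ‖b‖ + (1 + 2 * B2) * t := by
    have h1 : Real.sqrt (c23 ^ 2 * ‖b‖ ^ 2 + 2 * (δ * ‖b‖)) ≤
        Real.sqrt (c23 ^ 2 * ‖b‖ ^ 2) + Real.sqrt (2 * (δ * ‖b‖)) :=
      sqrt_add_le' (by positivity) (by positivity)
    have h2 : Real.sqrt (c23 ^ 2 * ‖b‖ ^ 2) = c23 * ‖b‖ := by
      rw [show c23 ^ 2 * ‖b‖ ^ 2 = (c23 * ‖b‖) ^ 2 by ring]
      exact Real.sqrt_sq (by positivity)
    have h3 : Real.sqrt (2 * (δ * ‖b‖)) ≤ (1 + 2 * B2) * t := by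
      have e1 : 2 * (δ * ‖b‖) ≤ (2 * B2) * δ := by
        have h' := mul_le_mul_of_nonneg_left hNb' (le_of_lt hδpos)
        linarith
      calc Real.sqrt (2 * (δ * ‖b‖)) ≤ Real.sqrt ((2 * B2) * δ) := Real.sqrt_le_sqrt e1
      _ = Real.sqrt (2 * B2) * t := by rw [htdef, Real.sqrt_mul (by positivity)]
      _ ≤ (1 + 2 * B2) * t := mul_le_mul_of_nonneg_right (sqrt_le_one_add (by positivity)) ht0
    linarith
  have hprodle : Real.sqrt (c13 ^ 2 * ‖a‖ ^ 2 + 2 * (δ * ‖a‖)) *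
      Real.sqrt (c23 ^ 2 * ‖b‖ ^ 2 + 2 * (δ * ‖b‖)) ≤
      (c13 * ‖a‖ + (1 + 2 * B1) * t) * (c23 * ‖b‖ + (1 + 2 * B2) * t) :=
    mul_le_mul hsqrtA hsqrtB (Real.sqrt_nonneg _) (by positivity)
  have hca : c13 * ‖a‖ ≤ B1 := by
    calc c13 * ‖a‖ ≤ 1 * B1 := mul_le_mul hc13_1 hNa' (norm_nonneg a) zero_le_one
    _ = B1 := one_mul _
  have hcb : c23 * ‖b‖ ≤ B2 := by
    calc c23 * ‖b‖ ≤ 1 * B2 := mul_le_mul hc23_1 hNb' (norm_nonneg b) zero_le_one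
    _ = B2 := one_mul _
  have hexpand : (c13 * ‖a‖ + (1 + 2 * B1) * t) * (c23 * ‖b‖ + (1 + 2 * B2) * t) ≤
      c13 * c23 * (‖a‖ * ‖b‖) + C1 * t + (1 + 2 * B1) * (1 + 2 * B2) * δ := by
    have h1 : c13 * ‖a‖ * ((1 + 2 * B2) * t) ≤ B1 * ((1 + 2 * B2) * t) :=
      mul_le_mul_of_nonneg_right hca (by positivity)
    have h2 : (1 + 2 * B1) * t * (c23 * ‖b‖) ≤ (1 + 2 * B1) * t * B2 := by
      refine mul_le_mul_of_nonneg_left hcb (by positivity)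
    rw [hC1def, ← ht2]
    have hexp0 : (c13 * ‖a‖ + (1 + 2 * B1) * t) * (c23 * ‖b‖ + (1 + 2 * B2) * t) =
        c13 * ‖a‖ * (c23 * ‖b‖) + c13 * ‖a‖ * ((1 + 2 * B2) * t)
          + (1 + 2 * B1) * t * (c23 * ‖b‖) + (1 + 2 * B1) * (1 + 2 * B2) * t ^ 2 := by
      ring
    have hexp1 : c13 * ‖a‖ * (c23 * ‖b‖) = c13 * c23 * (‖a‖ * ‖b‖) := by ring
    linarith [h1, h2]
  -- product of norms
  have hQ : ‖a‖ * ‖b‖ ≤ (1 + δ) * (1 + δ) / (s13 * s23) := by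
    have := mul_le_mul hNa hNb (norm_nonneg b) (by positivity)
    calc ‖a‖ * ‖b‖ ≤ (1 + δ) / s13 * ((1 + δ) / s23) := this
    _ = (1 + δ) * (1 + δ) / (s13 * s23) := by rw [div_mul_div_comm]
  have hmain_norm : (c12 + c13 * c23) * (‖a‖ * ‖b‖) ≤ ρ + 3 * R * δ := by
    have h5 : (c12 + c13 * c23) * (‖a‖ * ‖b‖) ≤
        (c12 + c13 * c23) * ((1 + δ) * (1 + δ) / (s13 * s23)) :=
      mul_le_mul_of_nonneg_left hQ (by positivity)
    have h6 : (c12 + c13 * c23) * ((1 + δ) * (1 + δ) / (s13 * s23)) =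
        ρ * ((1 + δ) * (1 + δ)) := by
      rw [hρdef]; field_simp
    have h7 : ρ * ((1 + δ) * (1 + δ)) ≤ ρ + 3 * R * δ := by
      have p1 : ρ * δ ≤ R * δ := mul_le_mul_of_nonneg_right hρR (le_of_lt hδpos)
      have pδ : δ * δ ≤ δ := by
        have h' := mul_le_mul_of_nonneg_left hδ1 (le_of_lt hδpos)
        linarith
      have p2 : ρ * (δ * δ) ≤ ρ * δ := mul_le_mul_of_nonneg_left pδ hρ0
      linarith [p1, p2]
    linarith
  -- error terms
  have herr1 : δ * ‖b‖ ≤ B2 * δ := by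
    calc δ * ‖b‖ ≤ δ * B2 := mul_le_mul_of_nonneg_left hNb' (le_of_lt hδpos)
    _ = B2 * δ := by ring
  have herr2 : δ * ‖a‖ ≤ B1 * δ := by
    calc δ * ‖a‖ ≤ δ * B1 := mul_le_mul_of_nonneg_left hNa' (le_of_lt hδpos)
    _ = B1 * δ := by ring
  -- splitting |⟪u,v⟫|
  have hsplit : |⟪u, v⟫| ≤ |⟪a - pj W₃ a, b - pj W₃ b⟫| + δ + (1 + δ) * δ := by
    have he : ⟪u, v⟫ = ⟪u - (a - pj W₃ a), v⟫ + ⟪a - pj W₃ a, v - (b - pj W₃ b)⟫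
        + ⟪a - pj W₃ a, b - pj W₃ b⟫ := by
      simp only [inner_sub_left, inner_sub_right]; ring
    have h1 : |⟪u - (a - pj W₃ a), v⟫| ≤ δ := by
      calc |⟪u - (a - pj W₃ a), v⟫| ≤ ‖u - (a - pj W₃ a)‖ * ‖v‖ := abs_real_inner_le_norm _ _
      _ ≤ δ * 1 := mul_le_mul hPau (le_of_eq hv1) (norm_nonneg v) (le_of_lt hδpos)
      _ = δ := mul_one _
    have h2 : |⟪a - pj W₃ a, v - (b - pj W₃ b)⟫| ≤ (1 + δ) * δ := by
      calc |⟪a - pj W₃ a, v - (b - pj W₃ b)⟫| ≤ ‖a - pj W₃ a‖ * ‖v - (b - pj W₃ b)‖ :=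
            abs_real_inner_le_norm _ _
      _ ≤ (1 + δ) * δ := mul_le_mul hPa1 hPbv (norm_nonneg _) (by positivity)
    calc |⟪u, v⟫| = |⟪u - (a - pj W₃ a), v⟫ + ⟪a - pj W₃ a, v - (b - pj W₃ b)⟫
        + ⟪a - pj W₃ a, b - pj W₃ b⟫| := by rw [← he]
    _ ≤ |⟪u - (a - pj W₃ a), v⟫ + ⟪a - pj W₃ a, v - (b - pj W₃ b)⟫|
        + |⟪a - pj W₃ a, b - pj W₃ b⟫| := abs_add_le _ _
    _ ≤ |⟪u - (a - pj W₃ a), v⟫| + |⟪a - pj W₃ a, v - (b - pj W₃ b)⟫|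
        + |⟪a - pj W₃ a, b - pj W₃ b⟫| := by gcongr; exact abs_add_le _ _
    _ ≤ |⟪a - pj W₃ a, b - pj W₃ b⟫| + δ + (1 + δ) * δ := by linarith
  -- final assembly
  have hfinal : |⟪u, v⟫| ≤ ρ + C1 * t + C2 * δ := by
    have hKEY2 : |⟪a - pj W₃ a, b - pj W₃ b⟫| ≤
        c12 * (‖a‖ * ‖b‖) + (c13 * c23 * (‖a‖ * ‖b‖) + C1 * t
          + (1 + 2 * B1) * (1 + 2 * B2) * δ) + δ * ‖b‖ + δ * ‖a‖ := by
      refine le_trans KEY ?_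
      have := le_trans hprodle hexpand
      linarith
    have hd2 : (1 + δ) * δ ≤ 2 * δ := by
      have h' := mul_le_mul_of_nonneg_left hδ1 (le_of_lt hδpos)
      linarith
    have hcc : c12 * (‖a‖ * ‖b‖) + c13 * c23 * (‖a‖ * ‖b‖) ≤ ρ + 3 * R * δ := by
      have : c12 * (‖a‖ * ‖b‖) + c13 * c23 * (‖a‖ * ‖b‖) =
          (c12 + c13 * c23) * (‖a‖ * ‖b‖) := by ring
      rw [this]; exact hmain_norm
    have : |⟪u, v⟫| ≤ ρ + 3 * R * δ + C1 * t + (1 + 2 * B1) * (1 + 2 * B2) * δ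
        + B2 * δ + B1 * δ + 3 * δ := by linarith
    calc |⟪u, v⟫| ≤ ρ + 3 * R * δ + C1 * t + (1 + 2 * B1) * (1 + 2 * B2) * δ
        + B2 * δ + B1 * δ + 3 * δ := this
    _ = ρ + C1 * t + C2 * δ := by rw [hC2def]; ring
  exact hfinal

end FriedrichsAux
namespace FriedrichsAux

variable {H : Type*} [NormedAddCommGroup H] [InnerProductSpace ℝ H] [CompleteSpace H]

lemma orth_inf_eq_closure_sup {V₁ V₃ : Submodule ℝ H} (hV₁ : IsClosed (V₁ : Set H))
    (hV₃ : IsClosed (V₃ : Set H)) :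
    (V₁ᗮ ⊔ V₃ᗮ).topologicalClosure = (V₁ ⊓ V₃)ᗮ := by
  haveI : CompleteSpace V₁ := hV₁.completeSpace_coe
  haveI : CompleteSpace V₃ := hV₃.completeSpace_coe
  have h1 : (V₁ᗮ ⊔ V₃ᗮ)ᗮ = V₁ ⊓ V₃ := by
    rw [← Submodule.inf_orthogonal, Submodule.orthogonal_orthogonal,
      Submodule.orthogonal_orthogonal]
  calc (V₁ᗮ ⊔ V₃ᗮ).topologicalClosure = (V₁ᗮ ⊔ V₃ᗮ)ᗮᗮ :=
        (Submodule.orthogonal_orthogonal_eq_closure _).symm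
  _ = (V₁ ⊓ V₃)ᗮ := by rw [h1]

end FriedrichsAux

open FriedrichsAux

theorem cos_angle_sum_and_inter_bound
    {H : Type*} [NormedAddCommGroup H] [InnerProductSpace ℝ H] [CompleteSpace H]
    (V₁ V₂ V₃ : Submodule ℝ H)
    (hV₁ : IsClosed (V₁ : Set H)) (hV₂ : IsClosed (V₂ : Set H)) (hV₃ : IsClosed (V₃ : Set H))
    (hsum₁ : IsClosed ((V₁ ⊔ V₃ : Submodule ℝ H) : Set H))
    (hsum₂ : IsClosed ((V₂ ⊔ V₃ : Submodule ℝ H) : Set H))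
    (h13 : friedrichsCos V₁ V₃ < 1) (h23 : friedrichsCos V₂ V₃ < 1) :
    friedrichsCos (V₁ ⊔ V₃) (V₂ ⊔ V₃) ≤
      (friedrichsCos V₁ V₂ + friedrichsCos V₁ V₃ * friedrichsCos V₂ V₃) /
        (Real.sqrt (1 - friedrichsCos V₁ V₃ ^ 2) * Real.sqrt (1 - friedrichsCos V₂ V₃ ^ 2)) ∧
    friedrichsCos (V₁ ⊓ V₃) (V₂ ⊓ V₃) ≤
      (friedrichsCos V₁ V₂ + friedrichsCos V₁ V₃ * friedrichsCos V₂ V₃) /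
        (Real.sqrt (1 - friedrichsCos V₁ V₃ ^ 2) * Real.sqrt (1 - friedrichsCos V₂ V₃ ^ 2)) := by
  constructor
  · have h := thmS V₁ V₂ V₃ hV₁ hV₂ hV₃ h13 h23
    rwa [hsum₁.submodule_topologicalClosure_eq, hsum₂.submodule_topologicalClosure_eq] at h
  · -- intersection case via duality
    have hcl13 : IsClosed ((V₁ ⊓ V₃ : Submodule ℝ H) : Set H) := by
      rw [Submodule.coe_inf]; exact hV₁.inter hV₃
    have hcl23 : IsClosed ((V₂ ⊓ V₃ : Submodule ℝ H) : Set H) := by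
      rw [Submodule.coe_inf]; exact hV₂.inter hV₃
    haveI : CompleteSpace (V₁ ⊓ V₃ : Submodule ℝ H) := hcl13.completeSpace_coe
    haveI : CompleteSpace (V₂ ⊓ V₃ : Submodule ℝ H) := hcl23.completeSpace_coe
    -- duality step
    have hd : friedrichsCos (V₁ ⊓ V₃) (V₂ ⊓ V₃) ≤
        friedrichsCos (V₁ ⊓ V₃)ᗮ (V₂ ⊓ V₃)ᗮ := by
      have h := fc_orthogonal_le (M := (V₁ ⊓ V₃)ᗮ) (N := (V₂ ⊓ V₃)ᗮ)
        (Submodule.isClosed_orthogonal _) (Submodule.isClosed_orthogonal _)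
      rwa [Submodule.orthogonal_orthogonal, Submodule.orthogonal_orthogonal] at h
    -- bound the dual angle via thmS for the orthogonal complements
    have hm13 : friedrichsCos V₁ᗮ V₃ᗮ ≤ friedrichsCos V₁ V₃ := fc_orthogonal_le hV₁ hV₃
    have hm23 : friedrichsCos V₂ᗮ V₃ᗮ ≤ friedrichsCos V₂ V₃ := fc_orthogonal_le hV₂ hV₃
    have hm12 : friedrichsCos V₁ᗮ V₂ᗮ ≤ friedrichsCos V₁ V₂ := fc_orthogonal_le hV₁ hV₂
    have h13' : friedrichsCos V₁ᗮ V₃ᗮ < 1 := lt_of_le_of_lt hm13 h13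
    have h23' : friedrichsCos V₂ᗮ V₃ᗮ < 1 := lt_of_le_of_lt hm23 h23
    have hkey := thmS V₁ᗮ V₂ᗮ V₃ᗮ (Submodule.isClosed_orthogonal _)
      (Submodule.isClosed_orthogonal _) (Submodule.isClosed_orthogonal _) h13' h23'
    rw [orth_inf_eq_closure_sup hV₁ hV₃, orth_inf_eq_closure_sup hV₂ hV₃] at hkey
    -- monotonicity of the bound
    have hmono : (friedrichsCos V₁ᗮ V₂ᗮ + friedrichsCos V₁ᗮ V₃ᗮ * friedrichsCos V₂ᗮ V₃ᗮ) /
          (Real.sqrt (1 - friedrichsCos V₁ᗮ V₃ᗮ ^ 2) *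
            Real.sqrt (1 - friedrichsCos V₂ᗮ V₃ᗮ ^ 2)) ≤
        (friedrichsCos V₁ V₂ + friedrichsCos V₁ V₃ * friedrichsCos V₂ V₃) /
          (Real.sqrt (1 - friedrichsCos V₁ V₃ ^ 2) *
            Real.sqrt (1 - friedrichsCos V₂ V₃ ^ 2)) := by
      have hb0 := fc_nonneg V₁ᗮ V₃ᗮ
      have hc0 := fc_nonneg V₂ᗮ V₃ᗮ
      have hb0' := fc_nonneg V₁ V₃
      have hc0' := fc_nonneg V₂ V₃
      have ha0' := fc_nonneg V₁ V₂
      have hnum : friedrichsCos V₁ᗮ V₂ᗮ + friedrichsCos V₁ᗮ V₃ᗮ * friedrichsCos V₂ᗮ V₃ᗮ ≤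
          friedrichsCos V₁ V₂ + friedrichsCos V₁ V₃ * friedrichsCos V₂ V₃ :=
        add_le_add hm12 (mul_le_mul hm13 hm23 hc0 hb0')
      have hden13 : Real.sqrt (1 - friedrichsCos V₁ V₃ ^ 2) ≤
          Real.sqrt (1 - friedrichsCos V₁ᗮ V₃ᗮ ^ 2) :=
        Real.sqrt_le_sqrt (by
          have := sq_le_sq_of_le hb0 hm13
          linarith)
      have hden23 : Real.sqrt (1 - friedrichsCos V₂ V₃ ^ 2) ≤
          Real.sqrt (1 - friedrichsCos V₂ᗮ V₃ᗮ ^ 2) :=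
        Real.sqrt_le_sqrt (by
          have := sq_le_sq_of_le hc0 hm23
          linarith)
      have hdpos : 0 < Real.sqrt (1 - friedrichsCos V₁ V₃ ^ 2) *
          Real.sqrt (1 - friedrichsCos V₂ V₃ ^ 2) := by
        have p1 : 0 < Real.sqrt (1 - friedrichsCos V₁ V₃ ^ 2) :=
          Real.sqrt_pos.mpr (one_sub_sq_pos hb0' h13)
        have p2 : 0 < Real.sqrt (1 - friedrichsCos V₂ V₃ ^ 2) :=
          Real.sqrt_pos.mpr (one_sub_sq_pos hc0' h23)
        positivity
      have hdle : Real.sqrt (1 - friedrichsCos V₁ V₃ ^ 2) *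
            Real.sqrt (1 - friedrichsCos V₂ V₃ ^ 2) ≤
          Real.sqrt (1 - friedrichsCos V₁ᗮ V₃ᗮ ^ 2) *
            Real.sqrt (1 - friedrichsCos V₂ᗮ V₃ᗮ ^ 2) :=
        mul_le_mul hden13 hden23 (Real.sqrt_nonneg _) (Real.sqrt_nonneg _)
      exact div_le_div₀ (by positivity) hnum hdpos hdle
    exact le_trans hd (le_trans hkey hmono)
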